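/- Let f ∈ C¹(ℝ²), Ω ⊆ ℝ an open interval, and φ₁, φ₂ : Ω → ℝ continuous with φ₁(x) < φ₂(x). Suppose there is a continuous b : Ω → ℝ such that for all x ∈ Ω and all y ∈ (φ₁(x), φ₂(x)) one has ∂f/∂y(x,y) ≥ b(x) > 0. Let g : Ω → ℝ satisfy, for all x ∈ Ω, g(x) ∈ (φ₁(x), φ₂(x)) and g(x) − f(x,g(x))/b(x) ∈ (φ₁(x), φ₂(x)). Then there exists a unique function ξ : Ω → ℝ with ξ(x) ∈ (φ₁(x), φ₂(x)) and f(x, ξ(x)) = 0 for all x ∈ Ω; moreover |ξ(x) − g(x)| ≤ |f(x,g(x))/b(x)| for all x ∈ Ω. -/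

import Mathlib

open Set

/-- Quantitative implicit function theorem (increasing case). -/
theorem stmt_0 (a b : ℝ) (f : ℝ → ℝ → ℝ)
    (hf : ContDiff ℝ 1 (fun p : ℝ × ℝ => f p.1 p.2))
    (φ₁ φ₂ bd g : ℝ → ℝ)
    (hφ₁ : ContinuousOn φ₁ (Ioo a b)) (hφ₂ : ContinuousOn φ₂ (Ioo a b))
    (hbd : ContinuousOn bd (Ioo a b))
    (hlt : ∀ x ∈ Ioo a b, φ₁ x < φ₂ x)
    (hder : ∀ x ∈ Ioo a b, ∀ y ∈ Ioo (φ₁ x) (φ₂ x),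
      deriv (fun t => f x t) y ≥ bd x ∧ 0 < bd x)
    (hg : ∀ x ∈ Ioo a b, g x ∈ Ioo (φ₁ x) (φ₂ x) ∧
      g x - f x (g x) / bd x ∈ Ioo (φ₁ x) (φ₂ x)) :
    ∃ ξ : ℝ → ℝ,
      (∀ x ∈ Ioo a b, ξ x ∈ Ioo (φ₁ x) (φ₂ x) ∧ f x (ξ x) = 0 ∧
        |ξ x - g x| ≤ |f x (g x) / bd x|) ∧
      (∀ ξ' : ℝ → ℝ, (∀ x ∈ Ioo a b, ξ' x ∈ Ioo (φ₁ x) (φ₂ x) ∧ f x (ξ' x) = 0) →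
        ∀ x ∈ Ioo a b, ξ' x = ξ x) := by
  have hfc : ∀ x : ℝ, Continuous (fun t => f x t) := fun x =>
    hf.continuous.comp (continuous_const.prodMk continuous_id)
  have hfd : ∀ x : ℝ, Differentiable ℝ (fun t => f x t) := fun x =>
    by have := (hf.differentiable one_ne_zero).comp ((differentiable_const x).prodMk differentiable_id); exact this
  have key : ∀ x ∈ Ioo a b, ∃ y, y ∈ Ioo (φ₁ x) (φ₂ x) ∧ f x y = 0 ∧
      |y - g x| ≤ |f x (g x) / bd x| := by
    intro x hx
    obtain ⟨hg0, hg1⟩ := hg x hx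
    have hc : 0 < bd x := (hder x hx _ hg0).2
    have hconv : Convex ℝ (Ioo (φ₁ x) (φ₂ x)) := convex_Ioo _ _
    have hcont : ContinuousOn (fun t => f x t) (Ioo (φ₁ x) (φ₂ x)) := (hfc x).continuousOn
    have hdiff : DifferentiableOn ℝ (fun t => f x t) (interior (Ioo (φ₁ x) (φ₂ x))) :=
      (hfd x).differentiableOn
    have hmvt := hconv.mul_sub_le_image_sub_of_le_deriv hcont hdiff
      (fun y hy => by rw [interior_Ioo] at hy; exact (hder x hx y hy).1)
    set F := f x (g x) with hF
    rcases le_or_gt 0 F with hF0 | hF0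
    · -- F ≥ 0, zero in [g - F/c, g]
      have hle : g x - F / bd x ≤ g x := by
        have : 0 ≤ F / bd x := div_nonneg hF0 hc.le
        linarith
      have h1 := hmvt _ hg1 _ hg0 hle
      have heq : bd x * (g x - (g x - F / bd x)) = F := by
        field_simp; ring
      rw [heq] at h1
      have hle0 : f x (g x - F / bd x) ≤ 0 := by linarith
      have hIcc : Icc (g x - F / bd x) (g x) ⊆ Ioo (φ₁ x) (φ₂ x) := fun y hy =>
        ⟨lt_of_lt_of_le hg1.1 hy.1, lt_of_le_of_lt hy.2 hg0.2⟩
      have hiv := intermediate_value_Icc hle (hcont.mono hIcc)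
      have : (0 : ℝ) ∈ Icc (f x (g x - F / bd x)) (f x (g x)) := ⟨hle0, hF0⟩
      obtain ⟨y, hyI, hy0⟩ := hiv this
      refine ⟨y, hIcc hyI, hy0, ?_⟩
      have habs : |y - g x| ≤ F / bd x := by
        rw [abs_le]; constructor <;> [linarith [hyI.1]; linarith [hyI.2, div_nonneg hF0 hc.le]]
      calc |y - g x| ≤ F / bd x := habs
        _ ≤ |F / bd x| := le_abs_self _
    · -- F < 0, zero in [g, g - F/c]
      have hle : g x ≤ g x - F / bd x := by
        have : F / bd x < 0 := div_neg_of_neg_of_pos hF0 hc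
        linarith
      have h1 := hmvt _ hg0 _ hg1 hle
      have heq : bd x * (g x - F / bd x - g x) = -F := by
        field_simp; ring
      rw [heq] at h1
      have hge0 : 0 ≤ f x (g x - F / bd x) := by linarith
      have hIcc : Icc (g x) (g x - F / bd x) ⊆ Ioo (φ₁ x) (φ₂ x) := fun y hy =>
        ⟨lt_of_lt_of_le hg0.1 hy.1, lt_of_le_of_lt hy.2 hg1.2⟩
      have hiv := intermediate_value_Icc hle (hcont.mono hIcc)
      have : (0 : ℝ) ∈ Icc (f x (g x)) (f x (g x - F / bd x)) := ⟨hF0.le, hge0⟩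
      obtain ⟨y, hyI, hy0⟩ := hiv this
      refine ⟨y, hIcc hyI, hy0, ?_⟩
      have habs : |y - g x| ≤ -(F / bd x) := by
        have : F / bd x < 0 := div_neg_of_neg_of_pos hF0 hc
        rw [abs_le]; constructor <;> [linarith [hyI.1]; linarith [hyI.2]]
      calc |y - g x| ≤ -(F / bd x) := habs
        _ ≤ |F / bd x| := neg_le_abs _
  choose ξ0 hξ using key
  refine ⟨fun x => if h : x ∈ Ioo a b then ξ0 x h else 0, ?_, ?_⟩
  · intro x hx
    simp only [dif_pos hx]
    exact hξ x hx
  · intro ξ' hξ' x hx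
    simp only [dif_pos hx]
    have hc : 0 < bd x := (hder x hx _ (hξ x hx).1).2
    have hmono : StrictMonoOn (fun t => f x t) (Ioo (φ₁ x) (φ₂ x)) :=
      strictMonoOn_of_deriv_pos (convex_Ioo _ _) (hfc x).continuousOn
        (fun y hy => by rw [interior_Ioo] at hy; exact lt_of_lt_of_le hc (hder x hx y hy).1)
    have h1 := (hξ' x hx)
    have h2 := hξ x hx
    exact hmono.injOn h1.1 h2.1 (by simp only [h1.2, h2.2.1])
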